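/- For every integer n ≥ -1, the n-th Fourier coefficient c(n) of the eta quotient η(τ)^24/η(2τ)^24 = q^{-1}∏_{n≥1}(1-q^n)^{24}/(1-q^{2n})^{24} satisfies (-1)^{n+1} c(n) > 0; that is, c(n) > 0 when n is odd and c(n) < 0 when n is even. -/

import Mathlib

open Polynomial

/-- `c : ℤ → ℤ` is the coefficient sequence of the formal Laurent series
`q⁻¹ ∏_{m≥1} (1-q^m)^24 (1-q^{2m})^{-24} = ∑_{n ≥ -1} c(n) qⁿ`:
it vanishes below `-1`, and for every `N` the coefficient of `q^N` in
`(∑_{n=-1}^{N+1} c(n) q^{n+1}) · ∏_{m=1}^{N} (1-q^{2m})^{24}` agrees with that of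
`∏_{m=1}^{N} (1-q^m)^{24}` (factors with `m > N` do not affect this coefficient). -/
def IsEtaQuotCoeff (c : ℤ → ℤ) : Prop :=
  (∀ n : ℤ, n < -1 → c n = 0) ∧
  ∀ N : ℕ,
    ((∑ n ∈ Finset.range (N + 2), C (c ((n : ℤ) - 1)) * X ^ n) *
        ∏ m ∈ Finset.Icc 1 N, ((1 : ℤ[X]) - X ^ (2 * m)) ^ 24).coeff N =
      (∏ m ∈ Finset.Icc 1 N, ((1 : ℤ[X]) - X ^ m) ^ 24).coeff N

namespace EtaAux

/-- All coefficients nonnegative. -/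
def Nn (p : ℤ[X]) : Prop := ∀ i, 0 ≤ p.coeff i

lemma Nn_one : Nn (1 : ℤ[X]) := by
  intro i; rw [coeff_one]; split <;> norm_num

lemma Nn_mul {p q : ℤ[X]} (hp : Nn p) (hq : Nn q) : Nn (p * q) := by
  intro n
  rw [coeff_mul]
  exact Finset.sum_nonneg fun x _ => mul_nonneg (hp _) (hq _)

lemma coeff_mul_ge {p q : ℤ[X]} (hp : Nn p) (hq : Nn q) (i j : ℕ) :
    p.coeff i * q.coeff j ≤ (p * q).coeff (i + j) := by
  rw [coeff_mul]
  exact Finset.single_le_sum (f := fun x : ℕ × ℕ => p.coeff x.1 * q.coeff x.2)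
    (fun x _ => mul_nonneg (hp _) (hq _))
    (Finset.HasAntidiagonal.mem_antidiagonal.mpr (rfl : (i, j).1 + (i, j).2 = i + j))

lemma Nn_pow {p : ℤ[X]} (hp : Nn p) (t : ℕ) : Nn (p ^ t) := by
  induction t with
  | zero => simpa using Nn_one
  | succ t ih => rw [pow_succ]; exact Nn_mul ih hp

lemma Nn_prod {s : Finset ℕ} {f : ℕ → ℤ[X]} (h : ∀ m ∈ s, Nn (f m)) :
    Nn (∏ m ∈ s, f m) := by
  induction s using Finset.induction with
  | empty => simpa using Nn_one
  | insert a s hne ih =>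
    rw [Finset.prod_insert hne]
    exact Nn_mul (h _ (Finset.mem_insert_self _ _))
      (ih fun m hm => h m (Finset.mem_insert_of_mem hm))

lemma pos_prod {s : Finset ℕ} {f : ℕ → ℤ[X]} {σ : ℕ → ℕ}
    (h1 : ∀ m ∈ s, Nn (f m)) (h2 : ∀ m ∈ s, 0 < (f m).coeff (σ m)) :
    0 < (∏ m ∈ s, f m).coeff (∑ m ∈ s, σ m) := by
  induction s using Finset.induction with
  | empty => simp
  | insert a s hne ih =>
    rw [Finset.prod_insert hne, Finset.sum_insert hne]
    have hrest := ih (fun m hm => h1 m (Finset.mem_insert_of_mem hm))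
      (fun m hm => h2 m (Finset.mem_insert_of_mem hm))
    calc (0:ℤ) < (f a).coeff (σ a) * (∏ m ∈ s, f m).coeff (∑ m ∈ s, σ m) :=
          mul_pos (h2 a (Finset.mem_insert_self _ _)) hrest
      _ ≤ _ := coeff_mul_ge (h1 a (Finset.mem_insert_self _ _))
          (Nn_prod fun m hm => h1 m (Finset.mem_insert_of_mem hm)) _ _

noncomputable def T (M : ℕ) : ℤ[X] := ∏ m ∈ Finset.Icc 1 M, (1 - X ^ (2 * m - 1)) ^ 24
noncomputable def Pp (M : ℕ) : ℤ[X] := ∏ m ∈ Finset.Icc 1 M, (1 + X ^ (2 * m - 1)) ^ 24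
noncomputable def U (K : ℕ) : ℤ[X] := ∏ j ∈ Finset.Icc 1 K, ((1 : ℤ[X]) - X ^ j) ^ 24
noncomputable def B (N : ℕ) : ℤ[X] := ∏ m ∈ Finset.Icc 1 N, ((1 : ℤ[X]) - X ^ (2 * m)) ^ 24
noncomputable def b (n : ℕ) : ℤ := (T n).coeff n

lemma T_succ (M : ℕ) : T (M + 1) = T M * (1 - X ^ (2 * M + 1)) ^ 24 := by
  rw [T, Finset.prod_Icc_succ_top (by omega), ← T]
  norm_num [show 2 * (M + 1) - 1 = 2 * M + 1 by omega]

lemma U_succ (K : ℕ) : U (K + 1) = U K * (1 - X ^ (K + 1)) ^ 24 := by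
  rw [U, Finset.prod_Icc_succ_top (by omega), ← U]

lemma B_succ (N : ℕ) : B (N + 1) = B N * (1 - X ^ (2 * N + 2)) ^ 24 := by
  rw [B, Finset.prod_Icc_succ_top (by omega), ← B]
  norm_num [show 2 * (N + 1) = 2 * N + 2 by omega]

lemma coeff_one_sub_pow_zero (k t : ℕ) (hk : 0 < k) :
    (((1 : ℤ[X]) - X ^ k) ^ t).coeff 0 = 1 := by
  rw [coeff_zero_eq_eval_zero]
  simp [zero_pow hk.ne']

lemma coeff_one_sub_pow (k t j : ℕ) (h0 : 0 < j) (hj : j < k) :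
    (((1 : ℤ[X]) - X ^ k) ^ t).coeff j = 0 := by
  induction t with
  | zero => simp [coeff_one, h0.ne']
  | succ t ih =>
    rw [pow_succ, mul_sub, mul_one, coeff_sub, ih, coeff_mul_X_pow',
      if_neg (by omega), sub_zero]

lemma coeff_mul_high (p q : ℤ[X]) (n : ℕ) (h0 : q.coeff 0 = 1)
    (h : ∀ j, 0 < j → j ≤ n → q.coeff j = 0) : (p * q).coeff n = p.coeff n := by
  rw [coeff_mul, Finset.sum_eq_single ((n, 0) : ℕ × ℕ)]
  · simp [h0]
  · rintro ⟨i, j⟩ hmem hne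
    have hij : i + j = n := Finset.HasAntidiagonal.mem_antidiagonal.mp hmem
    have hj : 0 < j := by
      rcases Nat.eq_zero_or_pos j with h' | h'
      · exact absurd (by simp [h', ← hij]) hne
      · exact h'
    rw [h j hj (by omega), mul_zero]
  · intro hmem
    exact absurd (Finset.HasAntidiagonal.mem_antidiagonal.mpr (by simp)) hmem

lemma coeff_mul_one_sub_pow (p : ℤ[X]) (k n : ℕ) (h : n < k) :
    (p * ((1 : ℤ[X]) - X ^ k) ^ 24).coeff n = p.coeff n :=
  coeff_mul_high _ _ _ (coeff_one_sub_pow_zero k 24 (by omega))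
    (fun j hj hjn => coeff_one_sub_pow k 24 j hj (by omega))

lemma T_stable {M M' n : ℕ} (h : M ≤ M') (hn : n ≤ 2 * M) :
    (T M').coeff n = (T M).coeff n := by
  induction M', h using Nat.le_induction with
  | base => rfl
  | succ M' hMM' ih =>
    rw [T_succ, coeff_mul_one_sub_pow _ _ _ (by omega), ih]

lemma U_stable {K n : ℕ} (h : n ≤ K) : (U K).coeff n = (U n).coeff n := by
  induction K, h using Nat.le_induction with
  | base => rfl
  | succ K hK ih =>
    rw [U_succ, coeff_mul_one_sub_pow _ _ _ (by omega), ih]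

lemma TB_eq (N : ℕ) : T (N + 1) * B N = U (2 * N + 1) := by
  induction N with
  | zero =>
    rw [show T 1 = T 0 * (1 - X ^ (2 * 0 + 1)) ^ 24 from T_succ 0,
      show U 1 = U 0 * (1 - X ^ (0 + 1)) ^ 24 from U_succ 0]
    have hT0 : T 0 = 1 := Finset.prod_empty
    have hU0 : U 0 = 1 := Finset.prod_empty
    have hB0 : B 0 = 1 := Finset.prod_empty
    rw [hT0, hU0, hB0]; ring
  | succ N ih =>
    have h1 : 2 * (N + 1) + 1 = (2 * N + 1) + 1 + 1 := by omega
    rw [T_succ, B_succ, h1, U_succ, U_succ, ← ih]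
    rw [show (2 * N + 1) + 1 = 2 * N + 2 by omega,
      show (2 * N + 2) + 1 = 2 * (N + 1) + 1 by omega]
    ring

lemma coeff_S (d : ℕ → ℤ) (N n : ℕ) (hn : n < N + 2) :
    (∑ k ∈ Finset.range (N + 2), C (d k) * X ^ k).coeff n = d n := by
  rw [finset_sum_coeff]
  rw [Finset.sum_eq_single n]
  · simp
  · intro k _ hk; simp [coeff_C_mul, coeff_X_pow, Ne.symm hk]
  · intro h; exact absurd (Finset.mem_range.mpr hn) h

lemma coeff_mul_left_congr {p p' : ℤ[X]} (q : ℤ[X]) (n : ℕ)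
    (h : ∀ i ≤ n, p.coeff i = p'.coeff i) : (p * q).coeff n = (p' * q).coeff n := by
  rw [coeff_mul, coeff_mul]
  refine Finset.sum_congr rfl ?_
  rintro ⟨i, j⟩ hm
  have hij : i + j = n := Finset.HasAntidiagonal.mem_antidiagonal.mp hm
  rw [h i (by omega)]

lemma coeff_comp_neg (p : ℤ[X]) (n : ℕ) :
    (p.comp (-X)).coeff n = (-1) ^ n * p.coeff n := by
  induction p using Polynomial.induction_on' with
  | add p q hp hq => simp [add_comp, hp, hq, mul_add]
  | monomial k a =>
    rw [← C_mul_X_pow_eq_monomial, mul_comp, C_comp, pow_comp, X_comp, neg_pow,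
      show ((-1 : ℤ[X]) ^ k) = C ((-1) ^ k) by rw [← map_one C, ← map_neg, ← map_pow],
      ← mul_assoc, ← C_mul, coeff_C_mul, coeff_C_mul, coeff_X_pow]
    split_ifs with h
    · subst h; ring
    · ring

lemma T_eq (M : ℕ) : T M = (Pp M).comp (-X) := by
  rw [Pp, prod_comp, T]
  refine Finset.prod_congr rfl fun m hm => ?_
  have h1 : 1 ≤ m := (Finset.mem_Icc.mp hm).1
  rw [pow_comp, add_comp, one_comp, pow_comp, X_comp,
    Odd.neg_pow ⟨m - 1, by omega⟩, ← sub_eq_add_neg]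

lemma b_sign (N : ℕ) : b N = (-1) ^ N * (Pp N).coeff N := by
  rw [b, T_eq, coeff_comp_neg]

lemma B_coeff_zero (N : ℕ) : (B N).coeff 0 = 1 := by
  rw [coeff_zero_eq_eval_zero, B, eval_prod]
  apply Finset.prod_eq_one
  intro m hm
  have h1 : 1 ≤ m := (Finset.mem_Icc.mp hm).1
  simp [zero_pow (show 2 * m ≠ 0 by omega)]

lemma Nn_one_add (k : ℕ) : Nn ((1 : ℤ[X]) + X ^ k) := by
  intro i
  rw [coeff_add, coeff_one, coeff_X_pow]
  split_ifs <;> norm_num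

lemma coeff_one_add_pow_zero (k e : ℕ) (hk : 0 < k) :
    (((1 : ℤ[X]) + X ^ k) ^ e).coeff 0 = 1 := by
  rw [coeff_zero_eq_eval_zero]
  simp [zero_pow hk.ne']

lemma coeff_one_add_k (k : ℕ) (hk : 0 < k) : ((1 : ℤ[X]) + X ^ k).coeff k = 1 := by
  rw [coeff_add, coeff_one, coeff_X_pow, if_neg hk.ne', if_pos rfl]; exact zero_add 1

lemma coeff_pow_pos (k e t : ℕ) (hk : 0 < k) (ht : t ≤ e) :
    0 < (((1 : ℤ[X]) + X ^ k) ^ e).coeff (t * k) := by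
  induction e generalizing t with
  | zero =>
    interval_cases t
    simp
  | succ e ih =>
    rcases Nat.eq_zero_or_pos t with rfl | htpos
    · rw [zero_mul, coeff_one_add_pow_zero k (e + 1) hk]; norm_num
    · obtain ⟨s, rfl⟩ : ∃ s, t = s + 1 := ⟨t - 1, by omega⟩
      have h1 : (s + 1) * k = s * k + k := by ring
      rw [h1, pow_succ]
      calc (0:ℤ) < (((1:ℤ[X]) + X ^ k) ^ e).coeff (s * k) * ((1:ℤ[X]) + X ^ k).coeff k := by
            rw [coeff_one_add_k k hk, mul_one]; exact ih s (by omega)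
        _ ≤ _ := coeff_mul_ge (Nn_pow (Nn_one_add k) e) (Nn_one_add k) _ _

lemma Pp_pos (N : ℕ) : 0 < (Pp N).coeff N := by
  rcases Nat.eq_zero_or_pos N with rfl | hN
  · simp [Pp]
  rcases Nat.even_or_odd N with ⟨r, hr⟩ | ⟨r, hr⟩
  · rcases eq_or_ne r 1 with rfl | hr2
    · -- N = 2
      have hσ : ∑ m ∈ Finset.Icc 1 N, (if m = 1 then 2 else 0) = N := by
        rw [Finset.sum_ite_eq' (Finset.Icc 1 N) 1 (fun _ => 2),
          if_pos (Finset.mem_Icc.mpr (by omega))]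
        omega
      rw [Pp]
      have key := pos_prod (s := Finset.Icc 1 N)
        (f := fun m => ((1 : ℤ[X]) + X ^ (2 * m - 1)) ^ 24)
        (σ := fun m => if m = 1 then 2 else 0)
        (fun x _ => Nn_pow (Nn_one_add _) 24) (fun x hx => ?_)
      · rw [hσ] at key; exact key
      · have hx1 : 1 ≤ x := (Finset.mem_Icc.mp hx).1
        split_ifs with h
        · subst h
          have := coeff_pow_pos 1 24 2 (by omega) (by omega)
          simpa using this
        · rw [coeff_one_add_pow_zero _ 24 (by omega)]; norm_num
    · -- N = 2r, r ≥ 2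
      have hrge : 2 ≤ r := by omega
      have hσ : ∑ m ∈ Finset.Icc 1 N,
          ((if m = 1 then 1 else 0) + (if m = r then 2 * r - 1 else 0)) = N := by
        rw [Finset.sum_add_distrib,
          Finset.sum_ite_eq' (Finset.Icc 1 N) 1 (fun _ => 1),
          Finset.sum_ite_eq' (Finset.Icc 1 N) r (fun _ => 2 * r - 1),
          if_pos (Finset.mem_Icc.mpr (by omega)), if_pos (Finset.mem_Icc.mpr (by omega))]
        omega
      rw [Pp]
      have key := pos_prod (s := Finset.Icc 1 N)
        (f := fun m => ((1 : ℤ[X]) + X ^ (2 * m - 1)) ^ 24)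
        (σ := fun m => (if m = 1 then 1 else 0) + (if m = r then 2 * r - 1 else 0))
        (fun x _ => Nn_pow (Nn_one_add _) 24) (fun x hx => ?_)
      · rw [hσ] at key; exact key
      · have hx1 : 1 ≤ x := (Finset.mem_Icc.mp hx).1
        rcases eq_or_ne x 1 with rfl | hne1
        · rw [if_pos rfl, if_neg (by omega)]
          have := coeff_pow_pos 1 24 1 (by omega) (by omega)
          simpa using this
        · rcases eq_or_ne x r with rfl | hner
          · rw [if_neg hne1, if_pos rfl, zero_add]
            have := coeff_pow_pos (2 * x - 1) 24 1 (by omega) (by omega)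
            rwa [one_mul] at this
          · rw [if_neg hne1, if_neg hner, zero_add,
              coeff_one_add_pow_zero _ 24 (by omega)]
            norm_num
  · -- N = 2r + 1 odd
    have hσ : ∑ m ∈ Finset.Icc 1 N, (if m = r + 1 then N else 0) = N := by
      rw [Finset.sum_ite_eq' (Finset.Icc 1 N) (r + 1) (fun _ => N),
        if_pos (Finset.mem_Icc.mpr (by omega))]
    rw [Pp]
    have key := pos_prod (s := Finset.Icc 1 N)
      (f := fun m => ((1 : ℤ[X]) + X ^ (2 * m - 1)) ^ 24)
      (σ := fun m => if m = r + 1 then N else 0)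
      (fun x _ => Nn_pow (Nn_one_add _) 24) (fun x hx => ?_)
    · rw [hσ] at key; exact key
    · have hx1 : 1 ≤ x := (Finset.mem_Icc.mp hx).1
      split_ifs with h
      · subst h
        have := coeff_pow_pos (2 * (r + 1) - 1) 24 1 (by omega) (by omega)
        rw [one_mul] at this
        rwa [show N = 2 * (r + 1) - 1 by omega]
      · rw [coeff_one_add_pow_zero _ 24 (by omega)]; norm_num

lemma c_eq (c : ℤ → ℤ) (hc : IsEtaQuotCoeff c) : ∀ N : ℕ, c ((N : ℤ) - 1) = b N := by
  intro N
  induction N using Nat.strong_induction_on with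
  | _ N ih =>
  have h1 : ((∑ n ∈ Finset.range (N + 2), C (c ((n : ℤ) - 1)) * X ^ n) * B N).coeff N =
      (U N).coeff N := hc.2 N
  have h2 : ((∑ n ∈ Finset.range (N + 2), C (b n) * X ^ n) * B N).coeff N =
      (U N).coeff N := by
    have hagree : ∀ i ≤ N,
        (∑ n ∈ Finset.range (N + 2), C (b n) * X ^ n).coeff i = (T (N + 1)).coeff i := by
      intro i hi
      rw [coeff_S b N i (by omega)]
      exact (T_stable (show i ≤ N + 1 by omega) (show i ≤ 2 * i by omega)).symm
    rw [coeff_mul_left_congr (B N) N hagree, TB_eq, U_stable (by omega)]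
  have hsum : (∑ n ∈ Finset.range (N + 2), C (c ((n : ℤ) - 1) - b n) * X ^ n)
      = (∑ n ∈ Finset.range (N + 2), C (c ((n : ℤ) - 1)) * X ^ n) -
        ∑ n ∈ Finset.range (N + 2), C (b n) * X ^ n := by
    rw [← Finset.sum_sub_distrib]
    exact Finset.sum_congr rfl fun n _ => by rw [map_sub, sub_mul]
  have h3 : ((∑ n ∈ Finset.range (N + 2), C (c ((n : ℤ) - 1) - b n) * X ^ n) * B N).coeff N
      = 0 := by
    rw [hsum, sub_mul, coeff_sub, h1, h2, sub_self]
  rw [coeff_mul, Finset.sum_eq_single ((N, 0) : ℕ × ℕ)] at h3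
  · rw [coeff_S _ N N (by omega), B_coeff_zero, mul_one] at h3
    omega
  · rintro ⟨i, j⟩ hm hne
    have hij : i + j = N := Finset.HasAntidiagonal.mem_antidiagonal.mp hm
    rcases Nat.eq_zero_or_pos j with rfl | hj
    · have : i = N := by omega
      subst this
      exact absurd rfl hne
    · rw [coeff_S _ N i (by omega), ih i (by omega), sub_self, zero_mul]
  · intro hmem
    exact absurd (Finset.HasAntidiagonal.mem_antidiagonal.mpr (by simp)) hmem

end EtaAux

/-- The Fourier coefficients of `η(τ)²⁴/η(2τ)²⁴` alternate in sign: `(-1)^{n+1} c(n) > 0`,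
i.e. `c(n) > 0` for `n` odd and `c(n) < 0` for `n` even, for all `n ≥ -1`. -/
theorem eta_quotient_coeff_sign_change (c : ℤ → ℤ) (hc : IsEtaQuotCoeff c) :
    ∀ n : ℤ, -1 ≤ n → (Odd n → 0 < c n) ∧ (Even n → c n < 0) := by
  intro n hn
  obtain ⟨N, hN⟩ : ∃ N : ℕ, (N : ℤ) = n + 1 :=
    ⟨(n + 1).toNat, Int.toNat_of_nonneg (by omega)⟩
  have hcb : c n = EtaAux.b N := by
    have := EtaAux.c_eq c hc N
    rwa [hN, show n + 1 - 1 = n by ring] at this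
  have hppos := EtaAux.Pp_pos N
  have hbs := EtaAux.b_sign N
  constructor
  · intro hodd
    have hNe : Even N := by
      have h : Even ((N : ℤ)) := by rw [hN]; exact hodd.add_one
      exact (Int.even_coe_nat N).mp h
    rw [hcb, hbs, hNe.neg_one_pow, one_mul]
    exact hppos
  · intro heven
    have hNo : Odd N := by
      have h : Odd ((N : ℤ)) := by rw [hN]; exact heven.add_one
      exact (Int.odd_coe_nat N).mp h
    rw [hcb, hbs, hNo.neg_one_pow]
    linarith
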